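/- Let A ∈ R^{m×N}, q ∈ (1,∞), x ∈ R^N k-sparse with support S, and h ∈ ker(A)\{0} with s_q(h) > 3^{q/(q−1)} k. Then (‖h‖₁ − 2‖h_S‖₁)/‖h‖_q > k^{1−1/q} ≥ ‖x‖₁/‖x‖_q. -/

import Mathlib

open Finset

/-- The `ℓ_q` quasi-norm `(∑ |z i|^q)^(1/q)` on `Fin N → ℝ`. -/
noncomputable def lqNorm {N : ℕ} (q : ℝ) (z : Fin N → ℝ) : ℝ :=
  (∑ i, |z i| ^ q) ^ (1 / q)

/-- The `ℓ_1` norm. -/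
noncomputable def l1Norm {N : ℕ} (z : Fin N → ℝ) : ℝ := ∑ i, |z i|

/-- The `ℓ_2` norm. -/
noncomputable def l2Norm {N : ℕ} (z : Fin N → ℝ) : ℝ := Real.sqrt (∑ i, (z i) ^ 2)

/-- The `q`-ratio sparsity `s_q(z) = (‖z‖₁/‖z‖_q)^(q/(q-1))`. -/
noncomputable def qSparsity {N : ℕ} (q : ℝ) (z : Fin N → ℝ) : ℝ :=
  (l1Norm z / lqNorm q z) ^ (q / (q - 1))

/-- Number of nonzero entries. -/
noncomputable def l0Norm {N : ℕ} (z : Fin N → ℝ) : ℕ :=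
  (Finset.univ.filter fun i => z i ≠ 0).card

/-- Restriction of `z` to an index set `S` (zero outside `S`). -/
noncomputable def restr {N : ℕ} (z : Fin N → ℝ) (S : Finset (Fin N)) : Fin N → ℝ :=
  fun i => if i ∈ S then z i else 0

/-- Hölder: `∑_{i∈T} |z i| ≤ |T|^{1-1/q} (∑_{i∈T} |z i|^q)^{1/q}`. -/
lemma holder_card {N : ℕ} {q : ℝ} (hq : 1 < q) (z : Fin N → ℝ) (T : Finset (Fin N)) :
    ∑ i ∈ T, |z i| ≤ (T.card : ℝ) ^ (1 - 1 / q) * (∑ i ∈ T, |z i| ^ q) ^ (1 / q) := by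
  have hq0 : (0 : ℝ) < q := lt_trans zero_lt_one hq
  have hq1 : q - 1 ≠ 0 := sub_ne_zero.mpr (ne_of_gt hq)
  have hpq : (q / (q - 1)).HolderConjugate q :=
    ((Real.holderConjugate_iff_eq_conjExponent hq).mpr rfl).symm
  have := Real.inner_le_Lp_mul_Lq T (fun _ => (1 : ℝ)) (fun i => |z i|) hpq
  simp only [one_mul, abs_one, abs_abs, Real.one_rpow, Finset.sum_const, nsmul_eq_mul,
    mul_one] at this
  have hexp : 1 / (q / (q - 1)) = 1 - 1 / q := by field_simp
  rwa [hexp] at this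

lemma lqNorm_pos {N : ℕ} {q : ℝ} (hq : 0 < q) {z : Fin N → ℝ} (hz : z ≠ 0) :
    0 < lqNorm q z := by
  obtain ⟨i, hi⟩ : ∃ i, z i ≠ 0 := by
    by_contra hc; push_neg at hc; exact hz (funext hc)
  have hsum : 0 < ∑ j, |z j| ^ q := by
    refine Finset.sum_pos' (fun j _ => Real.rpow_nonneg (abs_nonneg _) q) ⟨i, Finset.mem_univ i, ?_⟩
    exact Real.rpow_pos_of_pos (abs_pos.mpr hi) q
  exact Real.rpow_pos_of_pos hsum _

theorem nullspace_ratio_bound {m N : ℕ} (A : Matrix (Fin m) (Fin N) ℝ)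
    (q : ℝ) (hq : 1 < q) (k : ℝ) (x : Fin N → ℝ) (hx : x ≠ 0)
    (S : Finset (Fin N)) (hsupp : ∀ i, x i ≠ 0 → i ∈ S) (hcard : (S.card : ℝ) ≤ k)
    (h : Fin N → ℝ) (hker : A.mulVec h = 0) (hh : h ≠ 0)
    (hsq : qSparsity q h > (3 : ℝ) ^ (q / (q - 1)) * k) :
    (l1Norm h - 2 * l1Norm (restr h S)) / lqNorm q h > k ^ (1 - 1 / q) ∧
      k ^ (1 - 1 / q) ≥ l1Norm x / lqNorm q x := by
  have hq0 : (0 : ℝ) < q := lt_trans zero_lt_one hq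
  have hr : 0 < q / (q - 1) := div_pos hq0 (by linarith)
  have hk0 : (0 : ℝ) ≤ k := le_trans (Nat.cast_nonneg _) hcard
  have hq1 : q - 1 ≠ 0 := by linarith
  have hexp : (1 - 1 / q) * (q / (q - 1)) = 1 := by field_simp
  have hhq : 0 < lqNorm q h := lqNorm_pos hq0 hh
  have hxq : 0 < lqNorm q x := lqNorm_pos hq0 hx
  -- from the sparsity assumption: l1Norm h / lqNorm q h > 3 * k^(1-1/q)
  have h1nn : (0:ℝ) ≤ l1Norm h := Finset.sum_nonneg fun i _ => abs_nonneg _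
  have key : 3 * k ^ (1 - 1 / q) < l1Norm h / lqNorm q h := by
    by_contra hc
    push_neg at hc
    have hb : (l1Norm h / lqNorm q h) ^ (q / (q-1)) ≤ (3 * k ^ (1 - 1/q)) ^ (q / (q-1)) :=
      Real.rpow_le_rpow (div_nonneg h1nn hhq.le) hc hr.le
    rw [Real.mul_rpow (by norm_num) (Real.rpow_nonneg hk0 _), ← Real.rpow_mul hk0, hexp,
      Real.rpow_one] at hb
    rw [qSparsity] at hsq
    exact absurd (lt_of_lt_of_le hsq hb) (lt_irrefl _)
  -- Hölder bound for h on S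
  have hS : l1Norm (restr h S) ≤ k ^ (1 - 1 / q) * lqNorm q h := by
    have h1 : l1Norm (restr h S) = ∑ i ∈ S, |h i| := by
      rw [l1Norm, ← Finset.sum_filter_add_sum_filter_not Finset.univ (· ∈ S)]
      have e1 : ∀ i ∈ Finset.univ.filter (· ∈ S), |restr h S i| = |h i| := by
        intro i hi; simp only [Finset.mem_filter] at hi; simp [restr, hi.2]
      have e2 : ∀ i ∈ Finset.univ.filter (¬ · ∈ S), |restr h S i| = 0 := by
        intro i hi; simp only [Finset.mem_filter] at hi; simp [restr, hi.2]
      rw [Finset.sum_congr rfl e1, Finset.sum_congr rfl e2, Finset.sum_const_zero, add_zero]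
      congr 1
      ext i; simp
    rw [h1]
    calc ∑ i ∈ S, |h i| ≤ (S.card : ℝ) ^ (1 - 1/q) * (∑ i ∈ S, |h i| ^ q) ^ (1/q) :=
          holder_card hq h S
      _ ≤ k ^ (1 - 1/q) * lqNorm q h := by
          apply mul_le_mul
          · exact Real.rpow_le_rpow (Nat.cast_nonneg _) hcard (sub_nonneg.mpr ((div_le_one hq0).mpr hq.le))
          · exact Real.rpow_le_rpow (Finset.sum_nonneg fun i _ =>
              Real.rpow_nonneg (abs_nonneg _) q)
              (Finset.sum_le_sum_of_subset_of_nonneg (Finset.subset_univ S)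
                (fun i _ _ => Real.rpow_nonneg (abs_nonneg _) q)) (by positivity)
          · exact Real.rpow_nonneg (Finset.sum_nonneg fun i _ =>
              Real.rpow_nonneg (abs_nonneg _) q) _
          · exact Real.rpow_nonneg hk0 _
  constructor
  · rw [gt_iff_lt, lt_div_iff₀ hhq]
    have : 3 * k ^ (1 - 1/q) * lqNorm q h < l1Norm h := by
      rw [← lt_div_iff₀ hhq]; exact key
    nlinarith [hS, hhq]
  · rw [ge_iff_le, div_le_iff₀ hxq]
    have h1 : l1Norm x = ∑ i ∈ S, |x i| := by
      rw [l1Norm]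
      refine (Finset.sum_subset (Finset.subset_univ S) ?_).symm
      intro i _ hi
      simp [not_imp_comm.mp (hsupp i) hi]
    rw [h1]
    calc ∑ i ∈ S, |x i| ≤ (S.card : ℝ) ^ (1 - 1/q) * (∑ i ∈ S, |x i| ^ q) ^ (1/q) :=
          holder_card hq x S
      _ ≤ k ^ (1 - 1/q) * lqNorm q x := by
          apply mul_le_mul
          · exact Real.rpow_le_rpow (Nat.cast_nonneg _) hcard (sub_nonneg.mpr ((div_le_one hq0).mpr hq.le))
          · exact Real.rpow_le_rpow (Finset.sum_nonneg fun i _ =>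
              Real.rpow_nonneg (abs_nonneg _) q)
              (Finset.sum_le_sum_of_subset_of_nonneg (Finset.subset_univ S)
                (fun i _ _ => Real.rpow_nonneg (abs_nonneg _) q)) (by positivity)
          · exact Real.rpow_nonneg (Finset.sum_nonneg fun i _ =>
              Real.rpow_nonneg (abs_nonneg _) q) _
          · exact Real.rpow_nonneg hk0 _
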